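/- Lower bound on the exponential collision divergence via the information-spectrum divergence: Let ρ be a density operator and σ a positive semidefinite matrix of the same size, let η ∈ (0,1) and λ₁, λ₂ > 0, and suppose λ₁ρ + λ₂σ is positive definite. Then Tr[ ( (λ₁ρ+λ₂σ)^{−1/4} ρ (λ₁ρ+λ₂σ)^{−1/4} )² ] ≥ (1−η) / ( λ₁ + λ₂·e^{−D_s^η(ρ‖σ)} ). -/

import Mathlib

open scoped Kronecker ComplexOrder
open MeasureTheory Matrix

noncomputable section

namespace QD

/-! ### Haar measure on the unitary group -/

variable {n : Type*} [Fintype n] [DecidableEq n]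

theorem isClosed_unitaryGroup :
    IsClosed ((Matrix.unitaryGroup n ℂ : Set (Matrix n n ℂ))) := by
  have h1 : Continuous fun A : Matrix n n ℂ => star A * A :=
    Continuous.matrix_mul continuous_star continuous_id
  have h2 : Continuous fun A : Matrix n n ℂ => A * star A :=
    Continuous.matrix_mul continuous_id continuous_star
  have heq : (Matrix.unitaryGroup n ℂ : Set (Matrix n n ℂ)) =
      {A | star A * A = 1} ∩ {A | A * star A = 1} := by
    ext A; exact Iff.rfl
  rw [heq]
  exact (isClosed_eq h1 continuous_const).inter (isClosed_eq h2 continuous_const)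

theorem isCompact_unitaryGroup :
    IsCompact ((Matrix.unitaryGroup n ℂ : Set (Matrix n n ℂ))) := by
  have hK : IsCompact {A : Matrix n n ℂ | ∀ i j, A i j ∈ Metric.closedBall (0 : ℂ) 1} := by
    have heq : {A : Matrix n n ℂ | ∀ i j, A i j ∈ Metric.closedBall (0 : ℂ) 1} =
        Set.pi Set.univ fun _ : n => Set.pi Set.univ fun _ : n => Metric.closedBall (0 : ℂ) 1 := by
      refine Set.eq_of_subset_of_subset ?_ ?_
      · intro A hA
        exact fun i _ j _ => hA i j
      · intro A hA i j
        exact hA i trivial j trivial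
    rw [heq]
    exact isCompact_univ_pi fun _ => isCompact_univ_pi fun _ => isCompact_closedBall _ _
  refine IsCompact.of_isClosed_subset hK isClosed_unitaryGroup ?_
  intro A hA i j
  simpa [Metric.mem_closedBall, dist_eq_norm] using entry_norm_bound_of_unitary hA i j

instance : CompactSpace (Matrix.unitaryGroup n ℂ) :=
  isCompact_iff_compactSpace.mp isCompact_unitaryGroup

instance : IsTopologicalGroup (Matrix.unitaryGroup n ℂ) where
  continuous_mul := by
    apply Continuous.subtype_mk
    exact ((continuous_subtype_val.comp continuous_fst).matrix_mul
      (continuous_subtype_val.comp continuous_snd))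
  continuous_inv :=
    Continuous.subtype_mk (continuous_star.comp continuous_subtype_val) _

instance : MeasurableSpace (Matrix.unitaryGroup n ℂ) := borel _

instance : BorelSpace (Matrix.unitaryGroup n ℂ) := ⟨rfl⟩

/-- The normalized Haar (probability) measure on the unitary group of `ℂ^n`. -/
def haarU (n : Type*) [Fintype n] [DecidableEq n] : Measure (Matrix.unitaryGroup n ℂ) :=
  Measure.haarMeasure (⊤ : TopologicalSpace.PositiveCompacts (Matrix.unitaryGroup n ℂ))

/-- Entrywise (Bochner) integral of a matrix-valued function. -/
def matIntegral {G : Type*} [MeasurableSpace G] (μ : Measure G) {m l : Type*}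
    (f : G → Matrix m l ℂ) : Matrix m l ℂ :=
  Matrix.of fun i j => ∫ g, f g i j ∂μ

/-! ### Basic matrix-analytic quantities -/

/-- Trace norm `‖X‖₁ = Tr √(XᴴX)`. -/
def traceNorm (X : Matrix n n ℂ) : ℝ :=
  let h := (Matrix.posSemidef_conjTranspose_mul_self X).1
  ((h.eigenvectorUnitary : Matrix n n ℂ) *
    Matrix.diagonal (fun i => ((Real.sqrt (h.eigenvalues i) : ℝ) : ℂ)) *
    (star h.eigenvectorUnitary : Matrix n n ℂ)).trace.re

/-- Hilbert–Schmidt (Schatten-2) norm `‖X‖₂ = √(Tr[XᴴX])`. -/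
def hsNorm (X : Matrix n n ℂ) : ℝ :=
  Real.sqrt ((Xᴴ * X).trace.re)

/-- A density operator: positive semidefinite with unit trace. -/
def IsDensity (ρ : Matrix n n ℂ) : Prop := ρ.PosSemidef ∧ ρ.trace = 1

/-- Eigenvalues of a matrix (junk value `0` off the Hermitian matrices). -/
def eigvals (H : Matrix n n ℂ) : n → ℝ :=
  if h : H.IsHermitian then h.eigenvalues else 0

/-- Number of distinct eigenvalues `|spec(H)|`. -/
def specCount (H : Matrix n n ℂ) : ℕ := (Finset.univ.image (eigvals H)).card

/-- Spectral projection of a Hermitian matrix onto the eigenspace of `μ`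
(junk value `0` off the Hermitian matrices). -/
def eigProj (H : Matrix n n ℂ) (μ : ℝ) : Matrix n n ℂ :=
  if h : H.IsHermitian then
    (h.eigenvectorUnitary : Matrix n n ℂ) *
      Matrix.diagonal (fun i => if h.eigenvalues i = μ then (1 : ℂ) else 0) *
      (h.eigenvectorUnitary : Matrix n n ℂ)ᴴ
  else 0

/-- The pinching map `P_H[L] = ∑_i e_i L e_i`, the sum running over the spectral
projections `e_i` onto the distinct eigenvalues of `H`. -/
def pinch (H L : Matrix n n ℂ) : Matrix n n ℂ :=
  ∑ μ ∈ Finset.univ.image (eigvals H), eigProj H μ * L * eigProj H μ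

/-- The projection `{X ≤ Y}` onto the span of eigenvectors of `Y - X` with nonnegative
eigenvalues. -/
def projLE (X Y : Matrix n n ℂ) : Matrix n n ℂ :=
  if h : (Y - X).IsHermitian then
    (h.eigenvectorUnitary : Matrix n n ℂ) *
      Matrix.diagonal (fun i => if 0 ≤ h.eigenvalues i then (1 : ℂ) else 0) *
      (h.eigenvectorUnitary : Matrix n n ℂ)ᴴ
  else 0

/-- The projection onto the span of eigenvectors of `H` with positive eigenvalues. -/
def projPos (H : Matrix n n ℂ) : Matrix n n ℂ :=
  if h : H.IsHermitian then
    (h.eigenvectorUnitary : Matrix n n ℂ) *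
      Matrix.diagonal (fun i => if 0 < h.eigenvalues i then (1 : ℂ) else 0) *
      (h.eigenvectorUnitary : Matrix n n ℂ)ᴴ
  else 0

/-- Real power of a Hermitian matrix through the spectral decomposition
(junk value `0` off the Hermitian matrices). -/
def rpow (H : Matrix n n ℂ) (r : ℝ) : Matrix n n ℂ :=
  if h : H.IsHermitian then
    (h.eigenvectorUnitary : Matrix n n ℂ) *
      Matrix.diagonal (fun i => ((h.eigenvalues i ^ r : ℝ) : ℂ)) *
      (h.eigenvectorUnitary : Matrix n n ℂ)ᴴ
  else 0

/-- Matrix logarithm of a Hermitian (positive definite) matrix through the spectral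
decomposition (junk value `0` off the Hermitian matrices). -/
def matLog (H : Matrix n n ℂ) : Matrix n n ℂ :=
  if h : H.IsHermitian then
    (h.eigenvectorUnitary : Matrix n n ℂ) *
      Matrix.diagonal (fun i => ((Real.log (h.eigenvalues i) : ℝ) : ℂ)) *
      (h.eigenvectorUnitary : Matrix n n ℂ)ᴴ
  else 0

/-! ### Divergences -/

/-- `ε`-information-spectrum divergence
`D_s^ε(ρ‖σ) = sup {log c : c > 0, Tr[ρ {ρ ≤ cσ}] ≤ ε}`. -/
def Ds (ε : ℝ) (ρ σ : Matrix n n ℂ) : ℝ :=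
  sSup {x : ℝ | ∃ c : ℝ, 0 < c ∧ (ρ * projLE ρ ((c : ℂ) • σ)).trace.re ≤ ε ∧ x = Real.log c}

/-- `ε`-hypothesis-testing divergence
`D_h^ε(ρ‖σ) = sup {-log Tr[σT] : 0 ≤ T ≤ 1, Tr[ρT] ≥ 1 - ε}`. -/
def Dh (ε : ℝ) (ρ σ : Matrix n n ℂ) : ℝ :=
  sSup {x : ℝ | ∃ T : Matrix n n ℂ, T.PosSemidef ∧ (1 - T).PosSemidef ∧
    1 - ε ≤ (ρ * T).trace.re ∧ x = -Real.log ((σ * T).trace.re)}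

/-- `exp D₂*(ρ‖σ) = Tr[(σ^{-1/4} ρ σ^{-1/4})²]`, the exponential of the collision
divergence. -/
def expD2 (ρ σ : Matrix n n ℂ) : ℝ :=
  ((rpow σ (-(1/4 : ℝ)) * ρ * rpow σ (-(1/4 : ℝ))) ^ 2).trace.re

/-- Quantum relative entropy `D(ρ‖σ) = Tr[ρ(log ρ - log σ)]`. -/
def relEntropy (ρ σ : Matrix n n ℂ) : ℝ :=
  (ρ * (matLog ρ - matLog σ)).trace.re

/-- Quantum relative entropy variance `V(ρ‖σ) = Tr[ρ(log ρ - log σ)²] - D(ρ‖σ)²`. -/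
def relVar (ρ σ : Matrix n n ℂ) : ℝ :=
  ((ρ * (matLog ρ - matLog σ) ^ 2).trace.re) - (relEntropy ρ σ) ^ 2

/-! ### Bipartite notions; the first factor is the `A` system -/

variable {a b e : Type*}

/-- Partial trace over the first tensor factor. -/
def ptraceFst [Fintype a] (X : Matrix (a × b) (a × b) ℂ) : Matrix b b ℂ :=
  Matrix.of fun i j => ∑ x, X (x, i) (x, j)

/-- Partial trace over the `A₁` factor of a tripartite `(A₁ ⊗ C) ⊗ E` system. -/
def ptraceA1 [Fintype a] (X : Matrix ((a × b) × e) ((a × b) × e) ℂ) :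
    Matrix (b × e) (b × e) ℂ :=
  Matrix.of fun p q => ∑ x, X ((x, p.1), p.2) ((x, q.1), q.2)

/-- Pinching of a bipartite operator with respect to a state on the second factor:
`P_{σ} = id ⊗ (pinching w.r.t. σ)`. -/
def pinchSnd [Fintype a] [DecidableEq a] [Fintype b] [DecidableEq b]
    (σ : Matrix b b ℂ) (L : Matrix (a × b) (a × b) ℂ) : Matrix (a × b) (a × b) ℂ :=
  ∑ μ ∈ Finset.univ.image (eigvals σ),
    ((1 : Matrix a a ℂ) ⊗ₖ eigProj σ μ) * L * ((1 : Matrix a a ℂ) ⊗ₖ eigProj σ μ)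

/-- Conditional `ε`-hypothesis-testing entropy `H_h^ε(A|B)_ρ = -D_h^ε(ρ_{AB} ‖ 1_A ⊗ ρ_B)`. -/
def Hh [Fintype a] [DecidableEq a] [Fintype b] [DecidableEq b] (ε : ℝ)
    (ρ : Matrix (a × b) (a × b) ℂ) : ℝ :=
  -(Dh ε ρ ((1 : Matrix a a ℂ) ⊗ₖ ptraceFst ρ))

/-- Conditional entropy `H(A|B)_ρ = -Tr[ρ (log ρ - log (1_A ⊗ ρ_B))]`. -/
def condEntropy [Fintype a] [DecidableEq a] [Fintype b] [DecidableEq b]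
    (ρ : Matrix (a × b) (a × b) ℂ) : ℝ :=
  -relEntropy ρ ((1 : Matrix a a ℂ) ⊗ₖ ptraceFst ρ)

/-- Conditional information variance `V(A|B)_ρ`. -/
def condVar [Fintype a] [DecidableEq a] [Fintype b] [DecidableEq b]
    (ρ : Matrix (a × b) (a × b) ℂ) : ℝ :=
  relVar ρ ((1 : Matrix a a ℂ) ⊗ₖ ptraceFst ρ)

/-- The average decoupling error
`Δ = (1/2) ∫ ‖Tr_{A₁}[(U ⊗ 1_E) ρ (U ⊗ 1_E)†] - (1_C/|C|) ⊗ ρ_E‖₁ dU`,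
with respect to the normalized Haar measure, for a state on `(A₁ ⊗ C) ⊗ E`. -/
def decErr {a c e : Type*} [Fintype a] [DecidableEq a] [Fintype c] [DecidableEq c]
    [Fintype e] [DecidableEq e] (ρ : Matrix ((a × c) × e) ((a × c) × e) ℂ) : ℝ :=
  (1 / 2) * ∫ U : Matrix.unitaryGroup (a × c) ℂ,
    traceNorm
      (ptraceA1 (((U : Matrix (a × c) (a × c) ℂ) ⊗ₖ (1 : Matrix e e ℂ)) * ρ *
          ((U : Matrix (a × c) (a × c) ℂ) ⊗ₖ (1 : Matrix e e ℂ))ᴴ) -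
        (((Fintype.card c : ℂ)⁻¹ • (1 : Matrix c c ℂ)) ⊗ₖ ptraceFst ρ))
    ∂(haarU (a × c))

/-! ### Asymptotics -/

/-- `n`-fold Kronecker tensor power of a matrix. -/
def kronPow {α : Type*} [Fintype α] (ρ : Matrix α α ℂ) (N : ℕ) :
    Matrix (Fin N → α) (Fin N → α) ℂ :=
  Matrix.of fun p q => ∏ i, ρ (p i) (q i)

/-- `n`-fold Kronecker tensor power of a bipartite matrix, regarded as a bipartite
matrix on `A^n ⊗ E^n`. -/
def tensorPow {α β : Type*} [Fintype α] [Fintype β] (ρ : Matrix (α × β) (α × β) ℂ) (N : ℕ) :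
    Matrix ((Fin N → α) × (Fin N → β)) ((Fin N → α) × (Fin N → β)) ℂ :=
  Matrix.of fun p q => ∏ i, ρ (p.1 i, p.2 i) (q.1 i, q.2 i)

/-- The maximal remainder dimension `ℓ^ε(A|E)_ρ`: the largest `dC` dividing `|A|` such
that, for an identification `A ≅ A₁ ⊗ C` with `|C| = dC`, the average decoupling error
is at most `ε`. -/
def maxRemDim {α β : Type*} [Fintype α] [DecidableEq α] [Fintype β] [DecidableEq β]
    (ε : ℝ) (ρ : Matrix (α × β) (α × β) ℂ) : ℕ :=
  sSup {dC : ℕ | dC ∣ Fintype.card α ∧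
    ∃ φ : α ≃ Fin (Fintype.card α / dC) × Fin dC,
      decErr (Matrix.of fun p q => ρ (φ.symm p.1, p.2) (φ.symm q.1, q.2)) ≤ ε}

/-- The inverse of the cumulative distribution function of the standard normal
distribution. -/
def PhiInv (ε : ℝ) : ℝ :=
  sSup {u : ℝ | (∫ t in Set.Iic u, Real.exp (-(t ^ 2) / 2) / Real.sqrt (2 * Real.pi)) ≤ ε}


/-- `1_{A₁} ⊗ Y` : reinsertion of the identity on the `A₁` factor of `(A₁ ⊗ A₂) ⊗ E`. -/
def insertIdFst {a1 a2 e : Type*} [DecidableEq a1] (Y : Matrix (a2 × e) (a2 × e) ℂ) :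
    Matrix ((a1 × a2) × e) ((a1 × a2) × e) ℂ :=
  Matrix.of fun p q => (if p.1.1 = q.1.1 then (1 : ℂ) else 0) * Y (p.1.2, p.2) (q.1.2, q.2)

/-- The swap operator `F = ∑_{i,j} |i⟩⟨j| ⊗ |j⟩⟨i|` on `ℂ^α ⊗ ℂ^α`. -/
def swapOp (α : Type*) [Fintype α] [DecidableEq α] : Matrix (α × α) (α × α) ℂ :=
  ∑ i : α, ∑ j : α, (Matrix.single i j (1 : ℂ)) ⊗ₖ (Matrix.single j i (1 : ℂ))

/-- The operator on `(ℂ^{A₁} ⊗ ℂ^{A₂}) ⊗ (ℂ^{A₁} ⊗ ℂ^{A₂})` acting as the identity on the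
two `A₁` factors and as the swap on the two `A₂` factors. -/
def partialSwapOp (a1 a2 : Type*) [DecidableEq a1] [DecidableEq a2] :
    Matrix ((a1 × a2) × (a1 × a2)) ((a1 × a2) × (a1 × a2)) ℂ :=
  Matrix.of fun p q =>
    if p.1.1 = q.1.1 ∧ p.2.1 = q.2.1 ∧ p.1.2 = q.2.2 ∧ p.2.2 = q.1.2 then (1 : ℂ) else 0

end QD

namespace QD

section AuxLemmas

variable {m : Type*} [Fintype m] [DecidableEq m]

lemma entry_re_nonneg_of_psd {A : Matrix m m ℂ} (hA : A.PosSemidef) (i : m) : 0 ≤ (A i i).re := by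
  have h0 := hA.diag_nonneg (i := i)
  exact (Complex.le_def.mp h0).1

lemma trace_re_nonneg_of_psd {A : Matrix m m ℂ} (hA : A.PosSemidef) : 0 ≤ A.trace.re := by
  simp only [Matrix.trace, Matrix.diag, Complex.re_sum]
  exact Finset.sum_nonneg fun i _ => entry_re_nonneg_of_psd hA i

open scoped MatrixOrder in
lemma trace_mul_re_nonneg {A B : Matrix m m ℂ} (hA : A.PosSemidef) (hB : B.PosSemidef) :
    0 ≤ ((A * B).trace).re := by
  have h1 : (A * B).trace = (CFC.sqrt A * B * CFC.sqrt A).trace := by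
    conv_lhs => rw [← CFC.sqrt_mul_sqrt_self A hA.nonneg]
    rw [mul_assoc, trace_mul_comm]
  rw [h1]
  refine trace_re_nonneg_of_psd ?_
  have h := hB.mul_mul_conjTranspose_same (CFC.sqrt A)
  rwa [(CFC.sqrt_nonneg A).posSemidef.1.eq] at h

lemma VstarV {A : Matrix m m ℂ} (h : A.IsHermitian) :
    (h.eigenvectorUnitary : Matrix m m ℂ)ᴴ * (h.eigenvectorUnitary : Matrix m m ℂ) = 1 := by
  simpa [Matrix.star_eq_conjTranspose] using
    (Matrix.mem_unitaryGroup_iff'.mp h.eigenvectorUnitary.2)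

lemma VVstar {A : Matrix m m ℂ} (h : A.IsHermitian) :
    (h.eigenvectorUnitary : Matrix m m ℂ) * (h.eigenvectorUnitary : Matrix m m ℂ)ᴴ = 1 := by
  simpa [Matrix.star_eq_conjTranspose] using
    (Matrix.mem_unitaryGroup_iff.mp h.eigenvectorUnitary.2)

lemma conj_mul' {A : Matrix m m ℂ} (h : A.IsHermitian) (d e : m → ℂ) :
    ((h.eigenvectorUnitary : Matrix m m ℂ) * Matrix.diagonal d * (h.eigenvectorUnitary : Matrix m m ℂ)ᴴ) *
    ((h.eigenvectorUnitary : Matrix m m ℂ) * Matrix.diagonal e * (h.eigenvectorUnitary : Matrix m m ℂ)ᴴ) =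
    (h.eigenvectorUnitary : Matrix m m ℂ) * Matrix.diagonal (fun i => d i * e i) *
      (h.eigenvectorUnitary : Matrix m m ℂ)ᴴ := by
  have hv := VstarV h
  calc ((h.eigenvectorUnitary : Matrix m m ℂ) * Matrix.diagonal d * (h.eigenvectorUnitary : Matrix m m ℂ)ᴴ) *
      ((h.eigenvectorUnitary : Matrix m m ℂ) * Matrix.diagonal e * (h.eigenvectorUnitary : Matrix m m ℂ)ᴴ)
      = (h.eigenvectorUnitary : Matrix m m ℂ) * (Matrix.diagonal d *
        ((h.eigenvectorUnitary : Matrix m m ℂ)ᴴ * (h.eigenvectorUnitary : Matrix m m ℂ)) * Matrix.diagonal e) *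
        (h.eigenvectorUnitary : Matrix m m ℂ)ᴴ := by
        simp only [Matrix.mul_assoc]
    _ = _ := by rw [hv, Matrix.mul_one, Matrix.diagonal_mul_diagonal]

lemma conj_trace' {A : Matrix m m ℂ} (h : A.IsHermitian) (d : m → ℂ) :
    ((h.eigenvectorUnitary : Matrix m m ℂ) * Matrix.diagonal d * (h.eigenvectorUnitary : Matrix m m ℂ)ᴴ).trace
    = ∑ i, d i := by
  rw [Matrix.trace_mul_cycle, VstarV h, Matrix.one_mul, Matrix.trace_diagonal]

lemma conj_psd' {A : Matrix m m ℂ} (h : A.IsHermitian) {d : m → ℂ} (hd : ∀ i, 0 ≤ d i) :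
    ((h.eigenvectorUnitary : Matrix m m ℂ) * Matrix.diagonal d *
      (h.eigenvectorUnitary : Matrix m m ℂ)ᴴ).PosSemidef :=
  (Matrix.posSemidef_diagonal_iff.mpr hd).mul_mul_conjTranspose_same _

lemma conj_one' {A : Matrix m m ℂ} (h : A.IsHermitian) :
    (h.eigenvectorUnitary : Matrix m m ℂ) * Matrix.diagonal (fun _ => (1:ℂ)) *
      (h.eigenvectorUnitary : Matrix m m ℂ)ᴴ = 1 := by
  rw [show (Matrix.diagonal (fun _ => (1:ℂ)) : Matrix m m ℂ) = 1 from Matrix.diagonal_one,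
    Matrix.mul_one, VVstar h]

lemma spectral' {A : Matrix m m ℂ} (h : A.IsHermitian) :
    A = (h.eigenvectorUnitary : Matrix m m ℂ) *
      Matrix.diagonal (fun i => ((h.eigenvalues i : ℝ) : ℂ)) *
      (h.eigenvectorUnitary : Matrix m m ℂ)ᴴ := by
  conv_lhs => rw [h.spectral_theorem]
  rfl

/-! ### projLE facts -/

lemma projLE_eq {X Y : Matrix m m ℂ} (h : (Y - X).IsHermitian) :
    projLE X Y = (h.eigenvectorUnitary : Matrix m m ℂ) *
      Matrix.diagonal (fun i => if 0 ≤ h.eigenvalues i then (1 : ℂ) else 0) *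
      (h.eigenvectorUnitary : Matrix m m ℂ)ᴴ := dif_pos h

lemma projLE_psd {X Y : Matrix m m ℂ} (h : (Y - X).IsHermitian) : (projLE X Y).PosSemidef := by
  rw [projLE_eq h]
  exact conj_psd' h fun i => by split_ifs <;> norm_num

lemma projLE_idem {X Y : Matrix m m ℂ} (h : (Y - X).IsHermitian) :
    projLE X Y * projLE X Y = projLE X Y := by
  rw [projLE_eq h, conj_mul' h]
  have hfe : (fun i => (if 0 ≤ h.eigenvalues i then (1:ℂ) else 0) *
      (if 0 ≤ h.eigenvalues i then (1:ℂ) else 0)) =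
      fun i => if 0 ≤ h.eigenvalues i then (1:ℂ) else 0 := by
    funext i; split_ifs <;> norm_num
  rw [hfe]

lemma one_sub_projLE_eq {X Y : Matrix m m ℂ} (h : (Y - X).IsHermitian) :
    1 - projLE X Y = (h.eigenvectorUnitary : Matrix m m ℂ) *
      Matrix.diagonal (fun i => if 0 ≤ h.eigenvalues i then (0 : ℂ) else 1) *
      (h.eigenvectorUnitary : Matrix m m ℂ)ᴴ := by
  rw [projLE_eq h, ← conj_one' h, ← Matrix.sub_mul, ← Matrix.mul_sub, Matrix.diagonal_sub]
  have hfe : (fun i => (1:ℂ) - if 0 ≤ h.eigenvalues i then (1:ℂ) else 0) =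
      fun i => if 0 ≤ h.eigenvalues i then (0:ℂ) else 1 := by
    funext i; split_ifs <;> norm_num
  rw [hfe]

lemma one_sub_projLE_psd {X Y : Matrix m m ℂ} (h : (Y - X).IsHermitian) :
    (1 - projLE X Y).PosSemidef := by
  rw [one_sub_projLE_eq h]
  exact conj_psd' h fun i => by split_ifs <;> norm_num

lemma one_sub_projLE_idem {X Y : Matrix m m ℂ} (h : (Y - X).IsHermitian) :
    (1 - projLE X Y) * (1 - projLE X Y) = 1 - projLE X Y := by
  rw [one_sub_projLE_eq h, conj_mul' h]
  have hfe : (fun i => (if 0 ≤ h.eigenvalues i then (0:ℂ) else 1) *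
      (if 0 ≤ h.eigenvalues i then (0:ℂ) else 1)) =
      fun i => if 0 ≤ h.eigenvalues i then (0:ℂ) else 1 := by
    funext i; split_ifs <;> norm_num
  rw [hfe]

/-- Key spectral fact: on the complement of `{X ≤ Y}`, `X - Y` is positive. -/
lemma one_sub_projLE_conj_psd {X Y : Matrix m m ℂ} (h : (Y - X).IsHermitian) :
    ((1 - projLE X Y) * (X - Y) * (1 - projLE X Y)).PosSemidef := by
  have hXY : X - Y = (h.eigenvectorUnitary : Matrix m m ℂ) *
      Matrix.diagonal (fun i => ((-h.eigenvalues i : ℝ) : ℂ)) *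
      (h.eigenvectorUnitary : Matrix m m ℂ)ᴴ := by
    have h1 : X - Y = -(Y - X) := (neg_sub Y X).symm
    rw [h1]
    conv_lhs => rw [spectral' h]
    have h2 : (fun i => ((-h.eigenvalues i : ℝ) : ℂ)) =
        fun i => -((h.eigenvalues i : ℝ) : ℂ) := by push_cast; rfl
    rw [h2]
    rw [show (Matrix.diagonal fun i => -((h.eigenvalues i : ℝ) : ℂ)) =
        -Matrix.diagonal (fun i => ((h.eigenvalues i : ℝ) : ℂ)) from
      (Matrix.diagonal_neg _).symm]
    rw [Matrix.mul_neg, Matrix.neg_mul]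
  rw [one_sub_projLE_eq h, hXY, conj_mul' h, conj_mul' h]
  refine conj_psd' h fun i => ?_
  by_cases hi : 0 ≤ h.eigenvalues i
  · simp [hi]
  · simp only [hi, if_false, one_mul, mul_one]
    exact_mod_cast Complex.zero_le_real.mpr (by linarith : (0:ℝ) ≤ -h.eigenvalues i)

lemma sub_mul_projLE_trace_re_nonneg {X Y : Matrix m m ℂ} (h : (Y - X).IsHermitian) :
    0 ≤ (((Y - X) * projLE X Y).trace).re := by
  have key : ((Y - X) * projLE X Y).trace =
      ∑ i, (((h.eigenvalues i : ℝ) : ℂ) * (if 0 ≤ h.eigenvalues i then (1:ℂ) else 0)) := by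
    conv_lhs => rw [spectral' h, projLE_eq h]
    rw [conj_mul' h, conj_trace' h]
  rw [key, Complex.re_sum]
  refine Finset.sum_nonneg fun i _ => ?_
  by_cases hi : 0 ≤ h.eigenvalues i
  · simpa [hi] using hi
  · simp [hi]

/-! ### rpow facts -/

lemma rpow_eq {A : Matrix m m ℂ} (h : A.IsHermitian) (r : ℝ) :
    rpow A r = (h.eigenvectorUnitary : Matrix m m ℂ) *
      Matrix.diagonal (fun i => ((h.eigenvalues i ^ r : ℝ) : ℂ)) *
      (h.eigenvectorUnitary : Matrix m m ℂ)ᴴ := dif_pos h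

lemma rpow_psd {A : Matrix m m ℂ} (h : A.IsHermitian) (r : ℝ) (hA : ∀ i, 0 ≤ h.eigenvalues i) :
    (rpow A r).PosSemidef := by
  rw [rpow_eq h r]
  exact conj_psd' h fun i => by
    exact_mod_cast Complex.zero_le_real.mpr (Real.rpow_nonneg (hA i) r)

lemma rpow_herm {A : Matrix m m ℂ} (h : A.IsHermitian) (r : ℝ) (hA : ∀ i, 0 ≤ h.eigenvalues i) :
    (rpow A r).IsHermitian := (rpow_psd h r hA).1

lemma rpow_add' {A : Matrix m m ℂ} (h : A.IsHermitian) (hA : ∀ i, 0 < h.eigenvalues i) (a b : ℝ) :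
    rpow A a * rpow A b = rpow A (a + b) := by
  rw [rpow_eq h a, rpow_eq h b, rpow_eq h (a + b), conj_mul' h]
  have hfe : (fun i => ((h.eigenvalues i ^ a : ℝ) : ℂ) * ((h.eigenvalues i ^ b : ℝ) : ℂ)) =
      fun i => ((h.eigenvalues i ^ (a + b) : ℝ) : ℂ) := by
    funext i
    rw [← Complex.ofReal_mul, ← Real.rpow_add (hA i)]
  rw [hfe]

lemma rpow_zero' {A : Matrix m m ℂ} (h : A.IsHermitian) : rpow A 0 = 1 := by
  rw [rpow_eq h 0]
  have hfe : (fun i => ((h.eigenvalues i ^ (0:ℝ) : ℝ) : ℂ)) = fun _ : m => (1:ℂ) := by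
    funext i; rw [Real.rpow_zero]; norm_num
  rw [hfe, conj_one' h]

lemma rpow_one' {A : Matrix m m ℂ} (h : A.IsHermitian) : rpow A 1 = A := by
  rw [rpow_eq h 1]
  have hfe : (fun i => ((h.eigenvalues i ^ (1:ℝ) : ℝ) : ℂ)) =
      fun i => ((h.eigenvalues i : ℝ) : ℂ) := by
    funext i; rw [Real.rpow_one]
  rw [hfe, ← spectral' h]

/-! ### Cauchy–Schwarz for the trace inner product -/

lemma trace_herm_mul_eq_inner {T X : Matrix m m ℂ} (hT : T.IsHermitian) :
    (T * X).trace = ∑ p : m × m, (starRingEnd ℂ) (T p.1 p.2) * X p.1 p.2 := by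
  rw [Fintype.sum_prod_type]
  rw [Matrix.trace]
  simp only [Matrix.diag, Matrix.mul_apply]
  rw [Finset.sum_comm]
  refine Finset.sum_congr rfl fun i _ => Finset.sum_congr rfl fun j _ => ?_
  congr 1
  have := congrFun (congrFun hT.eq j) i
  rw [Matrix.conjTranspose_apply] at this
  exact this.symm

lemma cs_herm {T X : Matrix m m ℂ} (hT : T.IsHermitian) (hX : X.IsHermitian) :
    ((T * X).trace.re) ^ 2 ≤ ((T * T).trace.re) * ((X * X).trace.re) := by
  let vT : EuclideanSpace ℂ (m × m) := WithLp.toLp 2 (fun p : m × m => T p.1 p.2)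
  let vX : EuclideanSpace ℂ (m × m) := WithLp.toLp 2 (fun p : m × m => X p.1 p.2)
  have hinner : ∀ (Y : Matrix m m ℂ) (vY : EuclideanSpace ℂ (m × m)),
      (∀ p : m × m, vY p = Y p.1 p.2) → (Y.IsHermitian) → ∀ (Z : Matrix m m ℂ)
      (vZ : EuclideanSpace ℂ (m × m)), (∀ p, vZ p = Z p.1 p.2) →
      (Y * Z).trace = inner ℂ vY vZ := by
    intro Y vY hY hYh Z vZ hZ
    rw [trace_herm_mul_eq_inner hYh, PiLp.inner_apply]
    refine Finset.sum_congr rfl fun p _ => ?_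
    rw [hY, hZ, RCLike.inner_apply, mul_comm]
  have hTX : (T * X).trace = inner ℂ vT vX := hinner T vT (fun _ => rfl) hT X vX (fun _ => rfl)
  have hTT : (T * T).trace = inner ℂ vT vT := hinner T vT (fun _ => rfl) hT T vT (fun _ => rfl)
  have hXX : (X * X).trace = inner ℂ vX vX := hinner X vX (fun _ => rfl) hX X vX (fun _ => rfl)
  have h1 : ((T * X).trace.re) ^ 2 ≤ ‖(inner ℂ vT vX : ℂ)‖ ^ 2 := by
    rw [hTX]
    have : |(inner ℂ vT vX : ℂ).re| ≤ ‖(inner ℂ vT vX : ℂ)‖ := Complex.abs_re_le_norm _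
    nlinarith [abs_nonneg (inner ℂ vT vX : ℂ).re, norm_nonneg (inner ℂ vT vX : ℂ),
      sq_abs (inner ℂ vT vX : ℂ).re]
  have h2 : ‖(inner ℂ vT vX : ℂ)‖ ^ 2 ≤ ‖vT‖ ^ 2 * ‖vX‖ ^ 2 := by
    have := norm_inner_le_norm (𝕜 := ℂ) vT vX
    nlinarith [norm_nonneg (inner ℂ vT vX : ℂ), norm_nonneg vT, norm_nonneg vX]
  have h3 : (T * T).trace.re = ‖vT‖ ^ 2 := by
    rw [hTT]
    exact_mod_cast inner_self_eq_norm_sq (𝕜 := ℂ) vT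
  have h4 : (X * X).trace.re = ‖vX‖ ^ 2 := by
    rw [hXX]
    exact_mod_cast inner_self_eq_norm_sq (𝕜 := ℂ) vX
  rw [h3, h4]
  exact h1.trans h2

/-! ### The key bound -/

lemma key_bound (ρ σ : Matrix m m ℂ) (hρ : IsDensity ρ) (hσ : σ.PosSemidef)
    (η l₁ l₂ c : ℝ) (hη1 : η < 1) (hc : 0 < c) (hl₁ : 0 < l₁) (hl₂ : 0 < l₂)
    (hpd : ((l₁ : ℂ) • ρ + (l₂ : ℂ) • σ).PosDef)
    (hle : (ρ * projLE ρ ((c : ℂ) • σ)).trace.re ≤ η) :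
    1 - η ≤ expD2 ρ ((l₁ : ℂ) • ρ + (l₂ : ℂ) • σ) * (l₁ + l₂ / c) := by
  set τ : Matrix m m ℂ := (l₁ : ℂ) • ρ + (l₂ : ℂ) • σ with hτdef
  have hτ : τ.IsHermitian := hpd.1
  have hev : ∀ i, 0 < hτ.eigenvalues i := fun i => hpd.eigenvalues_pos i
  have hev' : ∀ i, 0 ≤ hτ.eigenvalues i := fun i => (hev i).le
  have hherm : (((c : ℂ) • σ) - ρ).IsHermitian := by
    have h1 : ((c : ℂ) • σ)ᴴ = (c : ℂ) • σ := by
      rw [Matrix.conjTranspose_smul, Complex.star_def, Complex.conj_ofReal, hσ.1.eq]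
    show (((c : ℂ) • σ) - ρ)ᴴ = _
    rw [Matrix.conjTranspose_sub, h1, hρ.1.1.eq]
  set Q : Matrix m m ℂ := projLE ρ ((c : ℂ) • σ) with hQdef
  set P : Matrix m m ℂ := 1 - Q with hPdef
  have hQpsd : Q.PosSemidef := projLE_psd hherm
  have hQQ : Q * Q = Q := projLE_idem hherm
  have hPpsd : P.PosSemidef := one_sub_projLE_psd hherm
  have hPh : P.IsHermitian := hPpsd.1
  have hPP : P * P = P := one_sub_projLE_idem hherm
  -- the quantity t = Tr[ρ P]
  set t : ℝ := (ρ * P).trace.re with htdef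
  have h_t : 1 - η ≤ t := by
    have e : (ρ * P).trace = ρ.trace - (ρ * Q).trace := by
      rw [hPdef, Matrix.mul_sub, Matrix.mul_one, Matrix.trace_sub]
    have : t = 1 - (ρ * Q).trace.re := by
      rw [htdef, e, Complex.sub_re, hρ.2]
      norm_num
    rw [this]
    linarith
  have h_t_pos : 0 < t := by linarith
  -- spectral bound : c * Tr[σ P] ≤ Tr[ρ P]
  have hspec : c * (σ * P).trace.re ≤ (ρ * P).trace.re := by
    have hM := one_sub_projLE_conj_psd hherm
    have hMtr : ((1 - Q) * (ρ - (c : ℂ) • σ) * (1 - Q)).trace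
        = ((ρ - (c : ℂ) • σ) * P).trace := by
      rw [Matrix.trace_mul_cycle]
      rw [show (1 - Q) * (1 - Q) * (ρ - (c : ℂ) • σ) = P * (ρ - (c : ℂ) • σ) from by
        rw [← hPdef, hPP]]
      rw [Matrix.trace_mul_comm]
    have h0 : 0 ≤ (((ρ - (c : ℂ) • σ) * P).trace).re := by
      rw [← hMtr]
      exact trace_re_nonneg_of_psd hM
    have e : ((ρ - (c : ℂ) • σ) * P).trace = (ρ * P).trace - (c : ℂ) * (σ * P).trace := by
      rw [Matrix.sub_mul, Matrix.trace_sub, smul_mul_assoc, Matrix.trace_smul, smul_eq_mul]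
    rw [e, Complex.sub_re, Complex.re_ofReal_mul] at h0
    linarith
  have hσP_le : (σ * P).trace.re ≤ t / c := by
    rw [le_div_iff₀ hc]
    linarith [hspec]
  -- Tr[τ P] ≤ (l₁ + l₂/c) t
  have hτP : (τ * P).trace.re = l₁ * t + l₂ * (σ * P).trace.re := by
    rw [hτdef, Matrix.add_mul, smul_mul_assoc, smul_mul_assoc, Matrix.trace_add,
      Matrix.trace_smul, Matrix.trace_smul, smul_eq_mul, smul_eq_mul, Complex.add_re,
      Complex.re_ofReal_mul, Complex.re_ofReal_mul]
  have hτP_le : (τ * P).trace.re ≤ (l₁ + l₂ / c) * t := by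
    rw [hτP]
    have h1 : l₂ * (σ * P).trace.re ≤ l₂ * (t / c) :=
      mul_le_mul_of_nonneg_left hσP_le hl₂.le
    have h2 : l₂ * (t / c) = l₂ / c * t := by ring
    nlinarith
  -- rpow matrices
  set R : Matrix m m ℂ := rpow τ (-(1/4 : ℝ)) with hRdef
  set S : Matrix m m ℂ := rpow τ (1/4 : ℝ) with hSdef
  set B : Matrix m m ℂ := rpow τ (1/2 : ℝ) with hBdef
  have hSR : S * R = 1 := by
    rw [hSdef, hRdef, rpow_add' hτ hev]
    norm_num
    exact rpow_zero' hτ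
  have hRS : R * S = 1 := by
    rw [hSdef, hRdef, rpow_add' hτ hev]
    norm_num
    exact rpow_zero' hτ
  have hSh : S.IsHermitian := rpow_herm hτ _ hev'
  have hSBS : S * B * S = τ := by
    rw [hSdef, hBdef, rpow_add' hτ hev, rpow_add' hτ hev]
    norm_num
    exact rpow_one' hτ
  set T : Matrix m m ℂ := R * ρ * R with hTdef
  set Xm : Matrix m m ℂ := S * P * S with hXdef
  have hRh : R.IsHermitian := rpow_herm hτ _ hev'
  have hT : T.IsHermitian := by
    show Tᴴ = T
    rw [hTdef, Matrix.conjTranspose_mul, Matrix.conjTranspose_mul, hRh.eq, hρ.1.1.eq]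
    simp only [Matrix.mul_assoc]
  have hXh : Xm.IsHermitian := by
    show Xmᴴ = Xm
    rw [hXdef, Matrix.conjTranspose_mul, Matrix.conjTranspose_mul, hSh.eq, hPh.eq]
    simp only [Matrix.mul_assoc]
  -- Tr[T Xm] = Tr[ρ P]
  have htr1 : (T * Xm).trace = (ρ * P).trace := by
    have e1 : T * Xm = R * (ρ * (P * S)) := by
      rw [hTdef, hXdef]
      calc R * ρ * R * (S * P * S) = R * (ρ * ((R * S) * (P * S))) := by
            simp only [Matrix.mul_assoc]
        _ = R * (ρ * (P * S)) := by rw [hRS, Matrix.one_mul]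
    rw [e1, Matrix.trace_mul_comm]
    have e2 : ρ * (P * S) * R = ρ * (P * (S * R)) := by simp only [Matrix.mul_assoc]
    rw [e2, hSR, Matrix.mul_one]
  -- Cauchy–Schwarz
  have hcs : t ^ 2 ≤ ((T * T).trace.re) * ((Xm * Xm).trace.re) := by
    have h := cs_herm hT hXh
    rwa [htr1, ← htdef] at h
  -- E = Tr[T²] and E ≥ 0
  have hE : expD2 ρ τ = (T * T).trace.re := by
    rw [expD2, pow_two]
  have hE0 : 0 ≤ (T * T).trace.re := by
    have h := trace_re_nonneg_of_psd (Matrix.posSemidef_conjTranspose_mul_self T)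
    rwa [hT.eq] at h
  -- Xm psd and B - Xm psd
  have hXpsd : Xm.PosSemidef := by
    have h := Matrix.posSemidef_conjTranspose_mul_self (P * S)
    have e : (P * S)ᴴ * (P * S) = Xm := by
      rw [Matrix.conjTranspose_mul, hSh.eq, hPh.eq]
      calc S * P * (P * S) = S * (P * P) * S := by simp only [Matrix.mul_assoc]
        _ = Xm := by rw [hPP, hXdef]
    rwa [e] at h
  have hBX : (B - Xm).PosSemidef := by
    have e : B - Xm = (Q * S)ᴴ * (Q * S) := by
      rw [Matrix.conjTranspose_mul, hSh.eq, hQpsd.1.eq]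
      have e1 : S * Q * (Q * S) = S * (Q * Q) * S := by simp only [Matrix.mul_assoc]
      rw [e1, hQQ]
      have e2 : Q = 1 - P := by rw [hPdef, sub_sub_cancel]
      rw [e2, Matrix.mul_sub, Matrix.sub_mul, Matrix.mul_one, hXdef]
      rw [show S * S = B from by
        rw [hSdef, hBdef, rpow_add' hτ hev, show (1/4 + 1/4 : ℝ) = 1/2 by norm_num]]
    rw [e]
    exact Matrix.posSemidef_conjTranspose_mul_self _
  -- Tr[Xm²] ≤ Tr[Xm B] = Tr[τ P]
  have hXX_le : (Xm * Xm).trace.re ≤ (Xm * B).trace.re := by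
    have h0 := trace_mul_re_nonneg hXpsd hBX
    have e : (Xm * (B - Xm)).trace = (Xm * B).trace - (Xm * Xm).trace := by
      rw [Matrix.mul_sub, Matrix.trace_sub]
    rw [e, Complex.sub_re] at h0
    linarith
  have htr2 : (Xm * B).trace = (τ * P).trace := by
    have e3 : Xm * B = S * (P * (S * B)) := by
      rw [hXdef]; simp only [Matrix.mul_assoc]
    rw [e3, Matrix.trace_mul_comm]
    have e4 : P * (S * B) * S = P * (S * B * S) := by simp only [Matrix.mul_assoc]
    rw [e4, hSBS, Matrix.trace_mul_comm]
  -- combine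
  have hXX_le' : (Xm * Xm).trace.re ≤ (l₁ + l₂ / c) * t := by
    rw [htr2] at hXX_le
    linarith
  have hfinal : t ^ 2 ≤ (T * T).trace.re * ((l₁ + l₂ / c) * t) := by
    calc t ^ 2 ≤ ((T * T).trace.re) * ((Xm * Xm).trace.re) := hcs
      _ ≤ (T * T).trace.re * ((l₁ + l₂ / c) * t) :=
        mul_le_mul_of_nonneg_left hXX_le' hE0
  rw [hE]
  have ht_le : t ≤ (T * T).trace.re * (l₁ + l₂ / c) := by
    have h := hfinal
    rw [pow_two] at h
    have := mul_le_mul_of_nonneg_right (le_refl ((T * T).trace.re * (l₁ + l₂ / c))) h_t_pos.le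
    nlinarith
  linarith

lemma Ds_set_mem (ρ σ : Matrix m m ℂ) (hρ : IsDensity ρ) (hσ : σ.PosSemidef)
    (η : ℝ) (hη : 0 < η) :
    ∃ c : ℝ, 0 < c ∧ (ρ * projLE ρ ((c : ℂ) • σ)).trace.re ≤ η := by
  have hs0 : 0 ≤ σ.trace.re := trace_re_nonneg_of_psd hσ
  set s : ℝ := σ.trace.re with hsdef
  set c : ℝ := η / (s + 1) with hcdef
  have hc : 0 < c := by positivity
  refine ⟨c, hc, ?_⟩
  have hherm : (((c : ℂ) • σ) - ρ).IsHermitian := by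
    have h1 : ((c : ℂ) • σ)ᴴ = (c : ℂ) • σ := by
      rw [Matrix.conjTranspose_smul, Complex.star_def, Complex.conj_ofReal, hσ.1.eq]
    show (((c : ℂ) • σ) - ρ)ᴴ = _
    rw [Matrix.conjTranspose_sub, h1, hρ.1.1.eq]
  set Q : Matrix m m ℂ := projLE ρ ((c : ℂ) • σ) with hQdef
  have h0 : 0 ≤ ((((c : ℂ) • σ - ρ) * Q).trace).re := sub_mul_projLE_trace_re_nonneg hherm
  have e : (((c : ℂ) • σ - ρ) * Q).trace = (c : ℂ) * (σ * Q).trace - (ρ * Q).trace := by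
    rw [Matrix.sub_mul, Matrix.trace_sub, smul_mul_assoc, Matrix.trace_smul, smul_eq_mul]
  rw [e, Complex.sub_re, Complex.re_ofReal_mul] at h0
  -- Tr[σ Q] ≤ Tr σ
  have hQ1 : 0 ≤ ((σ * (1 - Q)).trace).re :=
    trace_mul_re_nonneg hσ (one_sub_projLE_psd hherm)
  have e2 : (σ * (1 - Q)).trace = σ.trace - (σ * Q).trace := by
    rw [Matrix.mul_sub, Matrix.mul_one, Matrix.trace_sub]
  rw [e2, Complex.sub_re] at hQ1
  have hσQ : (σ * Q).trace.re ≤ s := by rw [hsdef]; linarith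
  have : (ρ * Q).trace.re ≤ c * s := by nlinarith
  have hcs : c * s ≤ η := by
    rw [hcdef]
    rw [div_mul_eq_mul_div, div_le_iff₀ (by linarith : (0:ℝ) < s + 1)]
    nlinarith
  linarith

end AuxLemmas

/-- **Lower bound on the exponential collision divergence via the information-spectrum
divergence** (Lemma 9 in the paper). -/
theorem expD2_ge_via_Ds
    (d : ℕ) (ρ σ : Matrix (Fin d) (Fin d) ℂ) (hρ : IsDensity ρ) (hσ : σ.PosSemidef)
    (η l₁ l₂ : ℝ) (hη0 : 0 < η) (hη1 : η < 1) (hl₁ : 0 < l₁) (hl₂ : 0 < l₂)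
    (hpd : ((l₁ : ℂ) • ρ + (l₂ : ℂ) • σ).PosDef) :
    (1 - η) / (l₁ + l₂ * Real.exp (-(Ds η ρ σ))) ≤
      expD2 ρ ((l₁ : ℂ) • ρ + (l₂ : ℂ) • σ) := by
  set E : ℝ := expD2 ρ ((l₁ : ℂ) • ρ + (l₂ : ℂ) • σ) with hEdef
  set Sset : Set ℝ :=
    {x : ℝ | ∃ c : ℝ, 0 < c ∧ (ρ * projLE ρ ((c : ℂ) • σ)).trace.re ≤ η ∧ x = Real.log c}
    with hSsetdef
  have hDs : Ds η ρ σ = sSup Sset := rfl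
  obtain ⟨c₀, hc₀, hc₀le⟩ := Ds_set_mem ρ σ hρ hσ η hη0
  have hne : Sset.Nonempty := ⟨Real.log c₀, c₀, hc₀, hc₀le, rfl⟩
  have hE0 : 0 < E := by
    have h := key_bound ρ σ hρ hσ η l₁ l₂ c₀ hη1 hc₀ hl₁ hl₂ hpd hc₀le
    rw [← hEdef] at h
    nlinarith [div_pos hl₂ hc₀]
  have hkey : ∀ x ∈ Sset, 1 - η ≤ E * (l₁ + l₂ * Real.exp (-x)) := by
    rintro x ⟨c, hc, hcle, rfl⟩
    have h := key_bound ρ σ hρ hσ η l₁ l₂ c hη1 hc hl₁ hl₂ hpd hcle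
    rw [← hEdef] at h
    rw [Real.exp_neg, Real.exp_log hc, ← div_eq_mul_inv]
    exact h
  have happrox : ∀ δ : ℝ, 0 < δ → 1 - η ≤ E * (l₁ + l₂ * Real.exp (δ - Ds η ρ σ)) := by
    intro δ hδ
    obtain ⟨x, hxS, hx⟩ := exists_lt_of_lt_csSup hne
      (show Ds η ρ σ - δ < sSup Sset by rw [← hDs]; linarith)
    refine (hkey x hxS).trans ?_
    have hexp : Real.exp (-x) ≤ Real.exp (δ - Ds η ρ σ) := Real.exp_le_exp.mpr (by linarith)
    have hmono : l₁ + l₂ * Real.exp (-x) ≤ l₁ + l₂ * Real.exp (δ - Ds η ρ σ) := by nlinarith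
    exact mul_le_mul_of_nonneg_left hmono hE0.le
  have hlim : 1 - η ≤ E * (l₁ + l₂ * Real.exp (-(Ds η ρ σ))) := by
    have hcont : Continuous fun δ : ℝ => E * (l₁ + l₂ * Real.exp (δ - Ds η ρ σ)) := by
      continuity
    have h0 := hcont.tendsto 0
    simp only [zero_sub] at h0
    have h0' := h0.mono_left (nhdsWithin_le_nhds (s := Set.Ioi (0:ℝ)))
    exact ge_of_tendsto h0'
      (Filter.eventually_of_mem self_mem_nhdsWithin fun δ hδ => happrox δ hδ)
  have hden : 0 < l₁ + l₂ * Real.exp (-(Ds η ρ σ)) := by positivity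
  rw [div_le_iff₀ hden]
  linarith


end QD
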